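/- Let c>0, Δ>0, D={(x,y): x²+y²<c²Δ²}, u(x,y)=c²Δ²−x²−y², and for μ>0 let p_μ(x,y) = (μ/(2πc)) e^{−μΔ+(μ/c)√(u(x,y))}/√(u(x,y)). Then for every λ>0, (1/h²) ∬_D (√(p_{λ+h}(x,y)) − √(p_λ(x,y)))² dx dy → I(λ)/4 as h→0, where I(λ) = (1/λ²)(1 − e^{−λΔ}(1+λ²Δ²)) is the Fisher information of one observation. -/

import Mathlib

open MeasureTheory Real

/-- The absolutely continuous density of a planar random flight at time step `Δ`,
speed `c` and Poisson rate `μ`, evaluated at the point `q` of the open disc of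
radius `cΔ`. -/
noncomputable def prfDensity (c Δ μ : ℝ) (q : ℝ × ℝ) : ℝ :=
  μ / (2 * π * c) *
    Real.exp (-μ * Δ + μ / c * Real.sqrt (c ^ 2 * Δ ^ 2 - q.1 ^ 2 - q.2 ^ 2)) /
      Real.sqrt (c ^ 2 * Δ ^ 2 - q.1 ^ 2 - q.2 ^ 2)

section Aux
open Set Filter

-- the substitution map
lemma psi_deriv {b : ℝ} (hb : 0 < b) {s : ℝ} (hs : s ∈ Ioo 0 b) :
    HasDerivWithinAt (fun s => Real.sqrt (b^2 - s^2)) (-s / Real.sqrt (b^2 - s^2)) (Ioo 0 b) s := by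
  have h1 : 0 < b^2 - s^2 := by nlinarith [hs.1, hs.2]
  have := (Real.hasDerivAt_sqrt (ne_of_gt h1)).comp s
    ((hasDerivAt_const s (b^2)).sub ((hasDerivAt_pow 2 s)))
  refine this.hasDerivWithinAt.congr_deriv ?_
  have h2 : Real.sqrt (b^2 - s^2) ≠ 0 := by positivity
  field_simp
  ring

lemma psi_inj {b : ℝ} (hb : 0 < b) :
    InjOn (fun s => Real.sqrt (b^2 - s^2)) (Ioo 0 b) := by
  intro x hx y hy hxy
  simp only at hxy
  have h1 : b^2 - x^2 ≥ 0 := by nlinarith [hx.1, hx.2]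
  have h2 : b^2 - y^2 ≥ 0 := by nlinarith [hy.1, hy.2]
  have := congrArg (fun t => t^2) hxy
  simp only [Real.sq_sqrt h1, Real.sq_sqrt h2] at this
  nlinarith [hx.1, hy.1]

lemma psi_image {b : ℝ} (hb : 0 < b) :
    (fun s => Real.sqrt (b^2 - s^2)) '' (Ioo 0 b) = Ioo 0 b := by
  ext t
  constructor
  · rintro ⟨s, hs, rfl⟩
    have h1 : 0 < b^2 - s^2 := by nlinarith [hs.1, hs.2]
    constructor
    · exact Real.sqrt_pos.2 h1
    · have : b^2 - s^2 < b^2 := by nlinarith [hs.1]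
      calc Real.sqrt (b^2 - s^2) < Real.sqrt (b^2) := by
            exact Real.sqrt_lt_sqrt (le_of_lt h1) this
        _ = b := by rw [Real.sqrt_sq hb.le]
  · rintro ⟨ht0, htb⟩
    refine ⟨Real.sqrt (b^2 - t^2), ⟨?_, ?_⟩, ?_⟩
    · exact Real.sqrt_pos.2 (by nlinarith)
    · calc Real.sqrt (b^2 - t^2) < Real.sqrt (b^2) := by
            apply Real.sqrt_lt_sqrt (by nlinarith) (by nlinarith)
        _ = b := by rw [Real.sqrt_sq hb.le]
    · show Real.sqrt (b^2 - Real.sqrt (b^2 - t^2)^2) = t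
      rw [Real.sq_sqrt (by nlinarith : (0:ℝ) ≤ b^2 - t^2)]
      simp only [sub_sub_cancel]
      exact Real.sqrt_sq ht0.le

-- pointwise: |ψ'| • g(ψ s) = exp (k*s)
lemma subst_pointwise {b k : ℝ} (hb : 0 < b) {s : ℝ} (hs : s ∈ Ioo 0 b) :
    |(-s / Real.sqrt (b^2 - s^2))| •
      ((fun r => r * (Real.exp (k * Real.sqrt (b^2 - r^2)) / Real.sqrt (b^2 - r^2)))
        (Real.sqrt (b^2 - s^2))) = Real.exp (k * s) := by
  have h1 : 0 < b^2 - s^2 := by nlinarith [hs.1, hs.2]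
  have h2 : 0 < Real.sqrt (b^2 - s^2) := Real.sqrt_pos.2 h1
  have h3 : b^2 - Real.sqrt (b^2 - s^2)^2 = s^2 := by rw [Real.sq_sqrt h1.le]; ring
  simp only [h3, Real.sqrt_sq hs.1.le, smul_eq_mul, abs_div, abs_neg, abs_of_pos hs.1,
    abs_of_pos h2]
  have h4 : s ≠ 0 := hs.1.ne'
  have h5 : Real.sqrt (b^2 - s^2) ≠ 0 := h2.ne'
  field_simp

lemma integrableOn_exp_Ioo (k a b : ℝ) : IntegrableOn (fun s => Real.exp (k * s)) (Ioo a b) := by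
  exact ((Real.continuous_exp.comp (continuous_const.mul continuous_id)).integrableOn_Icc).mono_set
    Ioo_subset_Icc_self

lemma oneD_integrable {b k : ℝ} (hb : 0 < b) :
    IntegrableOn (fun r => r * (Real.exp (k * Real.sqrt (b^2 - r^2)) / Real.sqrt (b^2 - r^2)))
      (Ioo 0 b) := by
  have key := integrableOn_image_iff_integrableOn_abs_deriv_smul (measurableSet_Ioo)
    (fun s hs => psi_deriv hb hs) (psi_inj hb)
    (fun r => r * (Real.exp (k * Real.sqrt (b^2 - r^2)) / Real.sqrt (b^2 - r^2)))
  rw [psi_image hb] at key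
  rw [key]
  apply (integrableOn_exp_Ioo k 0 b).congr_fun _ measurableSet_Ioo
  intro s hs
  exact (subst_pointwise hb hs).symm

lemma oneD_integral {b k : ℝ} (hb : 0 < b) (hk : k ≠ 0) :
    ∫ r in Ioo 0 b, r * (Real.exp (k * Real.sqrt (b^2 - r^2)) / Real.sqrt (b^2 - r^2))
      = (Real.exp (k * b) - 1) / k := by
  have key := integral_image_eq_integral_abs_deriv_smul (measurableSet_Ioo)
    (fun s hs => psi_deriv hb hs) (psi_inj hb)
    (fun r => r * (Real.exp (k * Real.sqrt (b^2 - r^2)) / Real.sqrt (b^2 - r^2)))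
  rw [psi_image hb] at key
  rw [key]
  rw [setIntegral_congr_fun measurableSet_Ioo (fun s hs => subst_pointwise hb hs)]
  rw [← integral_Ioc_eq_integral_Ioo, ← intervalIntegral.integral_of_le hb.le]
  have : ∀ x ∈ uIcc (0:ℝ) b, HasDerivAt (fun x => Real.exp (k*x)/k) (Real.exp (k * x)) x := by
    intro x _
    have := ((Real.hasDerivAt_exp (k*x)).comp x ((hasDerivAt_id x).const_mul k))
    simpa using this.div_const k |>.congr_deriv (by field_simp)
  rw [intervalIntegral.integral_eq_sub_of_hasDerivAt this
    ((Real.continuous_exp.comp (continuous_const.mul continuous_id)).intervalIntegrable 0 b)]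
  simp
  ring


-- pointwise identity on polarCoord.target
lemma polar_pointwise {b k : ℝ} (hb : 0 < b) {p : ℝ × ℝ} (hp : p ∈ polarCoord.target) :
    p.1 • ({q : ℝ × ℝ | q.1^2 + q.2^2 < b^2}.indicator
        (fun q => Real.exp (k * Real.sqrt (b^2 - q.1^2 - q.2^2)) /
          Real.sqrt (b^2 - q.1^2 - q.2^2)) (polarCoord.symm p))
      = (Ioo 0 b).indicator
          (fun r => r * (Real.exp (k * Real.sqrt (b^2 - r^2)) / Real.sqrt (b^2 - r^2))) p.1 := by
  have hp1 : 0 < p.1 := hp.1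
  have hq : (polarCoord.symm p).1 = p.1 * Real.cos p.2 ∧ (polarCoord.symm p).2
      = p.1 * Real.sin p.2 := by
    simp [polarCoord]
  have hsq : (polarCoord.symm p).1^2 + (polarCoord.symm p).2^2 = p.1^2 := by
    rw [hq.1, hq.2]
    have := Real.sin_sq_add_cos_sq p.2
    nlinarith [this]
  have hmem : polarCoord.symm p ∈ {q : ℝ × ℝ | q.1^2 + q.2^2 < b^2} ↔ p.1 ∈ Ioo 0 b := by
    simp only [mem_setOf_eq, hsq, mem_Ioo]
    constructor
    · intro h; exact ⟨hp1, by nlinarith⟩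
    · intro h; nlinarith [h.2]
  have harg : b^2 - (polarCoord.symm p).1^2 - (polarCoord.symm p).2^2 = b^2 - p.1^2 := by
    nlinarith [hsq]
  by_cases h : p.1 ∈ Ioo 0 b
  · rw [Set.indicator_of_mem (hmem.2 h), Set.indicator_of_mem h, harg]
    simp [smul_eq_mul]
  · rw [Set.indicator_of_notMem (fun hx => h (hmem.1 hx)), Set.indicator_of_notMem h]
    simp

lemma twoD_integral {b k : ℝ} (hb : 0 < b) (hk : k ≠ 0) :
    ∫ q in {q : ℝ × ℝ | q.1^2 + q.2^2 < b^2},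
        Real.exp (k * Real.sqrt (b^2 - q.1^2 - q.2^2)) / Real.sqrt (b^2 - q.1^2 - q.2^2)
      = 2 * π * ((Real.exp (k * b) - 1) / k) := by
  have hD : MeasurableSet {q : ℝ × ℝ | q.1^2 + q.2^2 < b^2} := by
    apply measurableSet_lt <;> fun_prop
  rw [← integral_indicator hD]
  rw [← integral_comp_polarCoord_symm]
  rw [setIntegral_congr_fun polarCoord.open_target.measurableSet
    (fun p hp => polar_pointwise hb hp)]
  have : ∫ p in polarCoord.target, (Ioo 0 b).indicator
      (fun r => r * (Real.exp (k * Real.sqrt (b^2 - r^2)) / Real.sqrt (b^2 - r^2))) p.1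
      = (∫ r in Ioi (0:ℝ), (Ioo 0 b).indicator
          (fun r => r * (Real.exp (k * Real.sqrt (b^2 - r^2)) / Real.sqrt (b^2 - r^2))) r)
        * ∫ θ in Ioo (-π) π, (1:ℝ) := by
    rw [show polarCoord.target = Ioi (0:ℝ) ×ˢ Ioo (-π) π from rfl, Measure.volume_eq_prod,
      ← setIntegral_prod_mul]
    simp
  rw [this]
  rw [setIntegral_indicator measurableSet_Ioo,
    show Ioi (0:ℝ) ∩ Ioo 0 b = Ioo 0 b by
      rw [inter_eq_self_of_subset_right]; exact fun x hx => hx.1,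
    oneD_integral hb hk]
  rw [setIntegral_const, Real.volume_real_Ioo_of_le (by linarith [Real.pi_pos] : -π ≤ π), smul_eq_mul]
  ring


set_option maxHeartbeats 1000000 in
lemma twoD_integrable {b k : ℝ} (hb : 0 < b) :
    IntegrableOn (fun q : ℝ × ℝ => Real.exp (k * Real.sqrt (b^2 - q.1^2 - q.2^2)) /
        Real.sqrt (b^2 - q.1^2 - q.2^2))
      {q : ℝ × ℝ | q.1^2 + q.2^2 < b^2} := by
  have hD : MeasurableSet {q : ℝ × ℝ | q.1^2 + q.2^2 < b^2} := by
    apply measurableSet_lt <;> fun_prop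
  set F : ℝ × ℝ → ℝ := fun q => Real.exp (k * Real.sqrt (b^2 - q.1^2 - q.2^2)) /
    Real.sqrt (b^2 - q.1^2 - q.2^2) with hF
  set f : ℝ × ℝ → ℝ := {q : ℝ × ℝ | q.1^2 + q.2^2 < b^2}.indicator F with hf
  rw [← integrable_indicator_iff hD]
  -- reduce to integrability on polarCoord.source
  have hsrc : volume.restrict polarCoord.source = volume := by
    rw [Measure.restrict_congr_set polarCoord_source_ae_eq_univ, Measure.restrict_univ]
  suffices hsuf : IntegrableOn f polarCoord.source by
    rwa [IntegrableOn, hsrc] at hsuf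
  -- change of variables
  set B : ℝ × ℝ → ℝ × ℝ →L[ℝ] ℝ × ℝ := fun p =>
    LinearMap.toContinuousLinearMap (Matrix.toLin (Module.Basis.finTwoProd ℝ) (Module.Basis.finTwoProd ℝ)
      !![Real.cos p.2, -p.1 * Real.sin p.2; Real.sin p.2, p.1 * Real.cos p.2]) with hB
  have B_det : ∀ p, (B p).det = p.1 := by
    intro p
    conv_rhs => rw [← one_mul p.1, ← Real.cos_sq_add_sin_sq p.2]
    simp only [hB, neg_mul, LinearMap.det_toContinuousLinearMap, LinearMap.det_toLin,
      Matrix.det_fin_two_of, sub_neg_eq_add]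
    ring
  have key := integrableOn_image_iff_integrableOn_abs_det_fderiv_smul volume
    polarCoord.open_target.measurableSet
    (fun p _ => (hasFDerivAt_polarCoord_symm p).hasFDerivWithinAt)
    (polarCoord.symm.injOn) f
  rw [polarCoord.symm_image_target_eq_source] at key
  rw [key]
  have hprod : IntegrableOn (fun p : ℝ × ℝ => ((Ioo 0 b).indicator
      (fun r => r * (Real.exp (k * Real.sqrt (b^2 - r^2)) / Real.sqrt (b^2 - r^2))) p.1) * 1)
      polarCoord.target := by
    rw [IntegrableOn, show polarCoord.target = Ioi (0:ℝ) ×ˢ Ioo (-π) π from rfl,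
      Measure.volume_eq_prod, ← Measure.prod_restrict]
    have h1 : Integrable (fun r => (Ioo 0 b).indicator
        (fun r => r * (Real.exp (k * Real.sqrt (b^2 - r^2)) / Real.sqrt (b^2 - r^2))) r)
        (volume.restrict (Ioi (0:ℝ))) :=
      ((integrable_indicator_iff measurableSet_Ioo).2 (oneD_integrable hb)).integrableOn
    have h2 : Integrable (fun _ : ℝ => (1:ℝ)) (volume.restrict (Ioo (-π) π)) :=
      integrableOn_const (by simp [Real.volume_Ioo])
    exact h1.mul_prod h2
  refine hprod.congr_fun ?_ polarCoord.open_target.measurableSet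
  intro p hp
  show _ = |(B p).det| • f (polarCoord.symm p)
  rw [B_det p, abs_of_pos hp.1]
  simp only [mul_one]
  exact (polar_pointwise hb hp).symm


variable {c Δ μ : ℝ}

lemma prf_eq (hc : 0 < c) (hμ : 0 < μ) : prfDensity c Δ μ = fun q =>
    (μ / (2 * π * c) * Real.exp (-μ * Δ)) *
      (Real.exp (μ/c * Real.sqrt ((c*Δ)^2 - q.1^2 - q.2^2)) /
        Real.sqrt ((c*Δ)^2 - q.1^2 - q.2^2)) := by
  funext q
  rw [prfDensity, show c^2*Δ^2 = (c*Δ)^2 by ring, Real.exp_add]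
  ring

lemma prf_integrableOn (hc : 0 < c) (hΔ : 0 < Δ) (hμ : 0 < μ) :
    IntegrableOn (prfDensity c Δ μ) {q : ℝ × ℝ | q.1^2 + q.2^2 < c^2 * Δ^2} := by
  rw [prf_eq hc hμ, show c^2*Δ^2 = (c*Δ)^2 by ring]
  exact (twoD_integrable (k := μ/c) (by positivity)).const_mul _

lemma prf_integral (hc : 0 < c) (hΔ : 0 < Δ) (hμ : 0 < μ) :
    ∫ q in {q : ℝ × ℝ | q.1^2 + q.2^2 < c^2 * Δ^2}, prfDensity c Δ μ q
      = 1 - Real.exp (-μ * Δ) := by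
  rw [prf_eq hc hμ, show c^2*Δ^2 = (c*Δ)^2 by ring]
  rw [integral_const_mul, twoD_integral (k := μ/c) (by positivity) (by positivity)]
  rw [show μ/c * (c*Δ) = μ*Δ by field_simp]
  rw [show -μ*Δ = -(μ*Δ) by ring, Real.exp_neg]
  have h1 : Real.exp (μ*Δ) ≠ 0 := (Real.exp_pos _).ne'
  field_simp


variable {c Δ : ℝ}

lemma prf_nonneg (hc : 0 < c) {μ : ℝ} (hμ : 0 < μ) (q : ℝ × ℝ) :
    0 ≤ prfDensity c Δ μ q := by
  rw [prfDensity]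
  have h1 : (0:ℝ) < μ / (2 * π * c) := by
    apply div_pos hμ
    have := Real.pi_pos
    positivity
  positivity

lemma prf_cross (hc : 0 < c) {μ ν : ℝ} (hμ : 0 < μ) (hν : 0 < ν) {q : ℝ × ℝ}
    (hq : q.1^2 + q.2^2 < c^2 * Δ^2) :
    Real.sqrt (prfDensity c Δ μ q) * Real.sqrt (prfDensity c Δ ν q)
      = (Real.sqrt (μ*ν) / ((μ+ν)/2)) * prfDensity c Δ ((μ+ν)/2) q := by
  have hu : 0 < c^2*Δ^2 - q.1^2 - q.2^2 := by linarith
  have hsu : 0 < Real.sqrt (c^2*Δ^2 - q.1^2 - q.2^2) := Real.sqrt_pos.2 hu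
  have hm : 0 < (μ+ν)/2 := by linarith
  have hπ : (0:ℝ) < π := Real.pi_pos
  have hcne : 2*π*c ≠ 0 := by positivity
  have key : prfDensity c Δ μ q * prfDensity c Δ ν q
      = ((Real.sqrt (μ*ν) / ((μ+ν)/2)) * prfDensity c Δ ((μ+ν)/2) q)^2 := by
    simp only [prfDensity]
    set su := Real.sqrt (c^2*Δ^2 - q.1^2 - q.2^2) with hsu_def
    set s' := Real.sqrt (μ*ν) with hs'_def
    set A := Real.exp (-μ*Δ + μ/c*su) with hA
    set B := Real.exp (-ν*Δ + ν/c*su) with hB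
    set E := Real.exp (-((μ+ν)/2)*Δ + (μ+ν)/2/c*su) with hE
    have h1 : s'^2 = μ*ν := Real.sq_sqrt (by positivity)
    have hexp : A*B = E^2 := by
      rw [hA, hB, hE, sq, ← Real.exp_add, ← Real.exp_add]; congr 1; ring
    have hmne : (μ+ν)/2 ≠ 0 := hm.ne'
    field_simp
    linear_combination (μ*ν) * hexp - E^2 * h1
  rw [← Real.sqrt_mul (prf_nonneg hc hμ q), key, Real.sqrt_sq]
  apply mul_nonneg (div_nonneg (Real.sqrt_nonneg _) hm.le)
    (prf_nonneg hc hm q)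

lemma sqdiff_eq (hc : 0 < c) {lam h : ℝ} (hlam : 0 < lam) (hlh : 0 < lam + h)
    {q : ℝ × ℝ} (hq : q.1^2 + q.2^2 < c^2 * Δ^2) :
    (Real.sqrt (prfDensity c Δ (lam + h) q) - Real.sqrt (prfDensity c Δ lam q)) ^ 2
      = prfDensity c Δ (lam+h) q + (prfDensity c Δ lam q
          - 2*(Real.sqrt ((lam+h)*lam)/(lam+h/2)) * prfDensity c Δ (lam+h/2) q) := by
  rw [sub_sq, Real.sq_sqrt (prf_nonneg hc hlh q), Real.sq_sqrt (prf_nonneg hc hlam q)]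
  have hcross := prf_cross hc hlh hlam hq
  rw [show ((lam+h)+lam)/2 = lam + h/2 by ring] at hcross
  rw [mul_assoc, hcross]
  ring

lemma integral_identity (hc : 0 < c) (hΔ : 0 < Δ) {lam h : ℝ} (hlam : 0 < lam)
    (hh : h ≠ 0) (hlh : 0 < lam + h) :
    ∫ q in {q : ℝ × ℝ | q.1^2 + q.2^2 < c^2 * Δ^2},
        (Real.sqrt (prfDensity c Δ (lam + h) q) - Real.sqrt (prfDensity c Δ lam q)) ^ 2
      = (1 - Real.exp (-(lam+h)*Δ)) + ((1 - Real.exp (-lam*Δ))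
          - 2*(Real.sqrt ((lam+h)*lam)/(lam+h/2)) * (1 - Real.exp (-(lam+h/2)*Δ))) := by
  have hD : MeasurableSet {q : ℝ × ℝ | q.1^2 + q.2^2 < c^2 * Δ^2} := by
    apply measurableSet_lt <;> fun_prop
  have hm : 0 < lam + h/2 := by linarith
  rw [setIntegral_congr_fun hD (fun q hq => sqdiff_eq hc hlam hlh hq)]
  have hg : IntegrableOn (fun q : ℝ × ℝ => prfDensity c Δ lam q
      - 2*(Real.sqrt ((lam+h)*lam)/(lam+h/2)) * prfDensity c Δ (lam+h/2) q)
      {q : ℝ × ℝ | q.1^2 + q.2^2 < c^2 * Δ^2} :=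
    (prf_integrableOn hc hΔ hlam).sub ((prf_integrableOn hc hΔ hm).const_mul _)
  have hg2 : IntegrableOn (fun q : ℝ × ℝ =>
      2*(Real.sqrt ((lam+h)*lam)/(lam+h/2)) * prfDensity c Δ (lam+h/2) q)
      {q : ℝ × ℝ | q.1^2 + q.2^2 < c^2 * Δ^2} :=
    (prf_integrableOn hc hΔ hm).const_mul _
  rw [integral_add (prf_integrableOn hc hΔ hlh) hg]
  rw [integral_sub (prf_integrableOn hc hΔ hlam) hg2]
  rw [integral_const_mul, prf_integral hc hΔ hlh, prf_integral hc hΔ hlam,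
    prf_integral hc hΔ hm]


lemma step3 {lam h : ℝ} (hlam : 0 < lam) (hlh : 0 < lam + h) :
    2 * (1 - Real.sqrt ((lam+h)*lam)/(lam+h/2))
      = h^2 / (2*(lam+h/2)^2*(1 + Real.sqrt ((lam+h)*lam)/(lam+h/2))) := by
  set s := Real.sqrt ((lam+h)*lam) with hs
  have hs2 : s^2 = (lam+h)*lam := Real.sq_sqrt (by positivity)
  have hs0 : 0 ≤ s := Real.sqrt_nonneg _
  have hm : 0 < lam + h/2 := by linarith
  have hms : 0 < (lam + h/2) + s := by linarith
  have key : h^2 = 4*((lam+h/2)^2 - s^2) := by linear_combination 4*hs2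
  rw [key]
  have hK : (0:ℝ) < 2*(lam+h/2)^2*(1 + s/(lam+h/2)) := by
    apply mul_pos (by positivity)
    have : 0 < s/(lam+h/2) + 1 := by
      have := div_nonneg hs0 hm.le; linarith
    linarith
  rw [eq_div_iff hK.ne']
  have hne : 2*lam + h ≠ 0 := by linarith
  field_simp
  ring

lemma denom_pos {lam h : ℝ} (hlam : 0 < lam) (hlh : 0 < lam + h) :
    (0:ℝ) < 2*(lam+h/2)^2*(1 + Real.sqrt ((lam+h)*lam)/(lam+h/2)) := by
  have hm : 0 < lam + h/2 := by linarith
  apply mul_pos (by positivity)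
  have := div_nonneg (Real.sqrt_nonneg ((lam+h)*lam)) hm.le
  linarith

lemma Gh_eq {Δ lam h : ℝ} (hlam : 0 < lam) (hh : h ≠ 0) (hlh : 0 < lam + h) :
    (1/h^2) * ((1 - Real.exp (-(lam+h)*Δ)) + ((1 - Real.exp (-lam*Δ))
        - 2*(Real.sqrt ((lam+h)*lam)/(lam+h/2)) * (1 - Real.exp (-(lam+h/2)*Δ))))
      = -Real.exp (-lam*Δ) * ((Real.exp (-h*(Δ/2)) - 1)/h)^2
        + (1 - Real.exp (-lam*Δ) * Real.exp (-h*(Δ/2)))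
          / (2*(lam+h/2)^2*(1 + Real.sqrt ((lam+h)*lam)/(lam+h/2))) := by
  have e1 : Real.exp (-(lam+h)*Δ) = Real.exp (-lam*Δ) * Real.exp (-h*(Δ/2))^2 := by
    rw [sq, ← Real.exp_add, ← Real.exp_add]; congr 1; ring
  have e2 : Real.exp (-(lam+h/2)*Δ) = Real.exp (-lam*Δ) * Real.exp (-h*(Δ/2)) := by
    rw [← Real.exp_add]; congr 1; ring
  rw [e1, e2]
  have h3 := step3 hlam hlh
  have hK := (denom_pos hlam hlh).ne'
  set E1 := Real.exp (-lam*Δ)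
  set E2 := Real.exp (-h*(Δ/2))
  have key : (1 - E1*E2^2) + ((1-E1)
      - 2*(Real.sqrt ((lam+h)*lam)/(lam+h/2))*(1 - E1*E2))
      = -E1*(E2-1)^2 + (h^2/(2*(lam+h/2)^2*(1 + Real.sqrt ((lam+h)*lam)/(lam+h/2))))
          *(1-E1*E2) := by
    rw [← h3]; ring
  rw [key, mul_add]
  congr 1
  · rw [div_pow]
    field_simp
  · have hrw : (1:ℝ)/h^2 * (h^2/(2*(lam+h/2)^2*(1 + Real.sqrt ((lam+h)*lam)/(lam+h/2)))
        * (1-E1*E2))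
        = (h^2/h^2) * ((1-E1*E2)/(2*(lam+h/2)^2*(1 + Real.sqrt ((lam+h)*lam)/(lam+h/2)))) := by
      ring
    rw [hrw, div_self (pow_ne_zero 2 hh), one_mul]

lemma limit_lemma (Δ lam : ℝ) (hΔ : 0 < Δ) (hlam : 0 < lam) :
    Filter.Tendsto (fun h : ℝ => (1/h^2) * ((1 - Real.exp (-(lam+h)*Δ))
        + ((1 - Real.exp (-lam*Δ))
          - 2*(Real.sqrt ((lam+h)*lam)/(lam+h/2)) * (1 - Real.exp (-(lam+h/2)*Δ)))))
      (nhdsWithin 0 {h : ℝ | h ≠ 0 ∧ 0 < lam + h})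
      (nhds ((1 / lam ^ 2 * (1 - Real.exp (-lam * Δ) * (1 + lam ^ 2 * Δ ^ 2))) / 4)) := by
  set S := {h : ℝ | h ≠ 0 ∧ 0 < lam + h}
  -- T1 limit
  have hd : HasDerivAt (fun h : ℝ => Real.exp (-h*(Δ/2))) (-(Δ/2)) 0 := by
    have h1 : HasDerivAt (fun h : ℝ => -h*(Δ/2)) (-(Δ/2)) 0 := by
      simpa using (hasDerivAt_id (0:ℝ)).neg.mul_const (Δ/2)
    have := (Real.hasDerivAt_exp ((-0)*(Δ/2))).comp 0 h1
    simpa [Function.comp_def] using this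
  have t1 : Filter.Tendsto (fun h : ℝ => (Real.exp (-h*(Δ/2)) - 1)/h)
      (nhdsWithin 0 S) (nhds (-(Δ/2))) := by
    have hsub : S ⊆ {(0:ℝ)}ᶜ := fun h hh => hh.1
    have := (hasDerivAt_iff_tendsto_slope.mp hd).mono_left (nhdsWithin_mono 0 hsub)
    apply this.congr
    intro h
    simp [slope_def_field]
  have T1 : Filter.Tendsto (fun h : ℝ => -Real.exp (-lam*Δ) * ((Real.exp (-h*(Δ/2)) - 1)/h)^2)
      (nhdsWithin 0 S) (nhds (-Real.exp (-lam*Δ) * (-(Δ/2))^2)) :=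
    (t1.pow 2).const_mul _
  -- T2 limit
  have c2 : ContinuousAt (fun h : ℝ => (1 - Real.exp (-lam*Δ) * Real.exp (-h*(Δ/2)))
      / (2*(lam+h/2)^2*(1 + Real.sqrt ((lam+h)*lam)/(lam+h/2)))) 0 := by
    apply ContinuousAt.div
    · fun_prop
    · apply ContinuousAt.mul (by fun_prop)
      apply ContinuousAt.add continuousAt_const
      apply ContinuousAt.div
      · exact (Real.continuous_sqrt.comp (by fun_prop)).continuousAt
      · fun_prop
      · norm_num [hlam.ne']
    · have := denom_pos hlam (h := 0) (by linarith)
      simpa using this.ne'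
  have T2 : Filter.Tendsto (fun h : ℝ => (1 - Real.exp (-lam*Δ) * Real.exp (-h*(Δ/2)))
      / (2*(lam+h/2)^2*(1 + Real.sqrt ((lam+h)*lam)/(lam+h/2))))
      (nhdsWithin 0 S)
      (nhds ((1 - Real.exp (-lam*Δ) * Real.exp (-(0:ℝ)*(Δ/2)))
        / (2*(lam+(0:ℝ)/2)^2*(1 + Real.sqrt ((lam+0)*lam)/(lam+(0:ℝ)/2))))) :=
    c2.tendsto.mono_left nhdsWithin_le_nhds
  have Tsum := T1.add T2
  have hval : -Real.exp (-lam*Δ) * (-(Δ/2))^2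
      + ((1 - Real.exp (-lam*Δ) * Real.exp (-(0:ℝ)*(Δ/2)))
        / (2*(lam+(0:ℝ)/2)^2*(1 + Real.sqrt ((lam+0)*lam)/(lam+(0:ℝ)/2))))
      = (1 / lam ^ 2 * (1 - Real.exp (-lam * Δ) * (1 + lam ^ 2 * Δ ^ 2))) / 4 := by
    rw [show ((lam+0)*lam : ℝ) = lam*lam by ring, Real.sqrt_mul_self hlam.le]
    have hl : lam ≠ 0 := hlam.ne'
    norm_num
    field_simp
    ring
  rw [hval] at Tsum
  apply Tsum.congr'
  rw [Filter.eventuallyEq_iff_exists_mem]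
  exact ⟨S, self_mem_nhdsWithin, fun h hh => (Gh_eq hlam hh.1 hh.2).symm⟩

end Aux

/-- Quadratic Hellinger expansion (proof of Lemma 4.1(ii)):
`(1/h²) ∬_D (√p_{λ+h} − √p_λ)² → I(λ)/4` as `h → 0`, where
`I(λ) = (1/λ²)(1 − e^{−λΔ}(1 + λ²Δ²))` is the Fisher information. -/
theorem hellinger_quadratic_expansion (c Δ lam : ℝ)
    (hc : 0 < c) (hΔ : 0 < Δ) (hlam : 0 < lam) :
    Filter.Tendsto
      (fun h : ℝ => (1 / h ^ 2) *
        ∫ q in {q : ℝ × ℝ | q.1 ^ 2 + q.2 ^ 2 < c ^ 2 * Δ ^ 2},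
          (Real.sqrt (prfDensity c Δ (lam + h) q) - Real.sqrt (prfDensity c Δ lam q)) ^ 2)
      (nhdsWithin 0 {h : ℝ | h ≠ 0 ∧ 0 < lam + h})
      (nhds ((1 / lam ^ 2 * (1 - Real.exp (-lam * Δ) * (1 + lam ^ 2 * Δ ^ 2))) / 4)) := by
  have hmain := limit_lemma Δ lam hΔ hlam
  apply hmain.congr'
  rw [Filter.eventuallyEq_iff_exists_mem]
  refine ⟨{h | h ≠ 0 ∧ 0 < lam + h}, self_mem_nhdsWithin, fun h hh => ?_⟩
  dsimp only
  rw [integral_identity hc hΔ hlam hh.1 hh.2]
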